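/- Let N₁, N₂, T be positive integers with 2 ≤ N₂ ≤ N₁ and T ≥ 2N₁, regarded as real numbers. In the plane ℝ², define the points D₁ = (N₁(1−N₁/T), 0), D₂ = (0, N₂), and D₄ = ((N₂−1)(1−(N₂−1)/T), (N₂−1)/T). Then the convex hull of {(0,0), D₁, D₂, D₄} strictly contains the convex hull of {(0,0), D₁, D₂} if and only if (N₂ − (N₂−1)/T)/((N₂−1)(1−(N₂−1)/T)) < N₂/(N₁(1−N₁/T)). -/

import Mathlib

/-- Generic lemma: adding `(c,d)` (with all coordinates positive) to the triangle
`(0,0), (a,0), (0,b)` strictly enlarges the convex hull iff `1 < c/a + d/b`. -/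
lemma triangle_hull_enlarges (a b c d : ℝ) (ha : 0 < a) (hb : 0 < b)
    (hc : 0 < c) (hd : 0 < d) :
    (convexHull ℝ {((0:ℝ),(0:ℝ)), (a,0), (0,b), (c,d)}
      ⊃ convexHull ℝ {((0:ℝ),(0:ℝ)), (a,0), (0,b)})
    ↔ 1 < c / a + d / b := by
  set S3 : Set (ℝ × ℝ) := {((0:ℝ),(0:ℝ)), (a,0), (0,b)} with hS3
  set S4 : Set (ℝ × ℝ) := {((0:ℝ),(0:ℝ)), (a,0), (0,b), (c,d)} with hS4
  have hsubS : S3 ⊆ S4 := by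
    intro x hx; simp only [hS3, hS4, Set.mem_insert_iff, Set.mem_singleton_iff] at hx ⊢; tauto
  have hsub : convexHull ℝ S3 ⊆ convexHull ℝ S4 := convexHull_mono hsubS
  -- halfspace
  have hlin : IsLinearMap ℝ (fun p : ℝ × ℝ => p.1 / a + p.2 / b) := by
    constructor
    · intro x y; simp [Prod.fst_add, Prod.snd_add]; ring
    · intro r x; simp [Prod.smul_fst, Prod.smul_snd, smul_eq_mul]; ring
  have hconvH : Convex ℝ {p : ℝ × ℝ | p.1 / a + p.2 / b ≤ 1} :=
    convex_halfSpace_le hlin 1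
  -- membership characterization
  have hmem : (c, d) ∈ convexHull ℝ S3 ↔ c / a + d / b ≤ 1 := by
    constructor
    · intro h
      have hH : convexHull ℝ S3 ⊆ {p : ℝ × ℝ | p.1 / a + p.2 / b ≤ 1} := by
        apply convexHull_min _ hconvH
        intro x hx
        simp only [hS3, Set.mem_insert_iff, Set.mem_singleton_iff] at hx
        rcases hx with rfl | rfl | rfl <;>
          simp [ha.ne', hb.ne', div_self, le_of_lt, ha, hb]
      exact hH h
    · intro hle
      set s : ℝ := c / a + d / b with hs
      have hs0 : 0 < s := by positivity
      have hA : (a, (0:ℝ)) ∈ convexHull ℝ S3 := subset_convexHull ℝ S3 (by simp [hS3])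
      have hB : ((0:ℝ), b) ∈ convexHull ℝ S3 := subset_convexHull ℝ S3 (by simp [hS3])
      have hO : ((0:ℝ), (0:ℝ)) ∈ convexHull ℝ S3 := subset_convexHull ℝ S3 (by simp [hS3])
      have hμ0 : 0 ≤ c / (a * s) := by positivity
      have hν0 : 0 ≤ d / (b * s) := by positivity
      have hμν : c / (a * s) + d / (b * s) = 1 := by
        field_simp [hs]
        rw [hs]; field_simp
      have hP : (c / (a * s)) • (a, (0:ℝ)) + (d / (b * s)) • ((0:ℝ), b)
          ∈ convexHull ℝ S3 :=
        (convex_convexHull ℝ S3) hA hB hμ0 hν0 hμν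
      have hD : s • ((c / (a * s)) • (a, (0:ℝ)) + (d / (b * s)) • ((0:ℝ), b))
          + (1 - s) • ((0:ℝ), (0:ℝ)) ∈ convexHull ℝ S3 :=
        (convex_convexHull ℝ S3) hP hO (le_of_lt hs0) (by linarith) (by ring)
      have heq : s • ((c / (a * s)) • (a, (0:ℝ)) + (d / (b * s)) • ((0:ℝ), b))
          + (1 - s) • ((0:ℝ), (0:ℝ)) = (c, d) := by
        ext <;> simp [Prod.smul_fst, Prod.smul_snd, smul_eq_mul] <;>
          field_simp <;> ring
      rwa [heq] at hD
  -- superset iff ¬ hull4 ⊆ hull3 iff (c,d) ∉ hull3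
  have hiff : convexHull ℝ S4 ⊆ convexHull ℝ S3 ↔ (c, d) ∈ convexHull ℝ S3 := by
    constructor
    · intro h
      exact h (subset_convexHull ℝ S4 (by simp [hS4]))
    · intro h
      apply convexHull_min _ (convex_convexHull ℝ S3)
      intro x hx
      simp only [hS4, Set.mem_insert_iff, Set.mem_singleton_iff] at hx
      rcases hx with rfl | rfl | rfl | rfl
      · exact subset_convexHull ℝ S3 (by simp [hS3])
      · exact subset_convexHull ℝ S3 (by simp [hS3])
      · exact subset_convexHull ℝ S3 (by simp [hS3])
      · exact h
  constructor
  · intro hss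
    by_contra hle
    push_neg at hle
    have := hmem.mpr hle
    exact hss.2 (hiff.mpr this)
  · intro hlt
    refine ⟨hsub, fun h => ?_⟩
    have := hmem.mp (hiff.mp h)
    linarith

theorem grassmannian_superposition_improves_iff
    (N₁ N₂ T : ℕ) (hN₂ : 2 ≤ N₂) (hN₂₁ : N₂ ≤ N₁) (hT : 2 * N₁ ≤ T) :
    (convexHull ℝ {((0 : ℝ), (0 : ℝ)),
        ((N₁ : ℝ) * (1 - (N₁ : ℝ) / (T : ℝ)), (0 : ℝ)),
        ((0 : ℝ), (N₂ : ℝ)),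
        (((N₂ : ℝ) - 1) * (1 - ((N₂ : ℝ) - 1) / (T : ℝ)), ((N₂ : ℝ) - 1) / (T : ℝ))}
      ⊃ convexHull ℝ {((0 : ℝ), (0 : ℝ)),
        ((N₁ : ℝ) * (1 - (N₁ : ℝ) / (T : ℝ)), (0 : ℝ)),
        ((0 : ℝ), (N₂ : ℝ))})
    ↔ ((N₂ : ℝ) - ((N₂ : ℝ) - 1) / (T : ℝ))
          / (((N₂ : ℝ) - 1) * (1 - ((N₂ : ℝ) - 1) / (T : ℝ)))
        < (N₂ : ℝ) / ((N₁ : ℝ) * (1 - (N₁ : ℝ) / (T : ℝ))) := by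
  have h2 : (2:ℝ) ≤ (N₂:ℝ) := by exact_mod_cast hN₂
  have h21 : (N₂:ℝ) ≤ (N₁:ℝ) := by exact_mod_cast hN₂₁
  have hTr : 2 * (N₁:ℝ) ≤ (T:ℝ) := by exact_mod_cast hT
  have hT0 : (0:ℝ) < T := by linarith
  have ha : 0 < (N₁:ℝ) * (1 - (N₁:ℝ) / (T:ℝ)) := by
    have h1 : (N₁:ℝ) / (T:ℝ) < 1 := by
      rw [div_lt_one hT0]; linarith
    have : (0:ℝ) < (N₁:ℝ) := by linarith
    nlinarith
  have hb : (0:ℝ) < (N₂:ℝ) := by linarith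
  have hc : 0 < ((N₂:ℝ) - 1) * (1 - ((N₂:ℝ) - 1) / (T:ℝ)) := by
    have h1 : ((N₂:ℝ) - 1) / (T:ℝ) < 1 := by
      rw [div_lt_one hT0]; linarith
    nlinarith
  have hd : 0 < ((N₂:ℝ) - 1) / (T:ℝ) := by
    apply div_pos <;> linarith
  rw [triangle_hull_enlarges _ _ _ _ ha hb hc hd]
  rw [div_lt_div_iff₀ hc ha, div_add_div _ _ (ne_of_gt ha) (ne_of_gt hb),
      lt_div_iff₀ (by positivity)]
  constructor <;> intro h <;> nlinarith [mul_pos ha hb, mul_pos hc hb]
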